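/- Let 𝒩 = {1, …, N} and suppose the channel is spatially independent with 0 < ε_j < 1 for each j and ε_1 ≥ ε_2 ≥ … ≥ ε_N, where ε_I := ∏_{j∈I} ε_j for every I ⊆ 𝒩. Let R_1, …, R_N > 0 satisfy the one-sided fairness condition ε_1 R_1 ≥ ε_2 R_2 ≥ … ≥ ε_N R_N. Then for every nonempty subset S ⊆ 𝒩, letting m := min S, it holds that f^m_S R_m ≥ f^i_S R_i for every i ∈ S; that is, the maximum of f^i_S R_i over i ∈ S is attained at the smallest index of S. -/

import Mathlib

open Finset

/-- The explicit formula `f^i_S := ∑_{H ⊆ S∖{i}} (−1)^{|H|} / (1 − ε_{(𝒩∖(S∖{i}))∪H})`. -/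
noncomputable def fcoef {N : Type*} [Fintype N] [DecidableEq N]
    (ε : Finset N → ℝ) (i : N) (S : Finset N) : ℝ :=
  ∑ H ∈ (S.erase i).powerset, (-1 : ℝ) ^ H.card / (1 - ε ((S.erase i)ᶜ ∪ H))

section aux

variable {n : ℕ} (εi : Fin n → ℝ)

lemma aux_prod_pos (h0 : ∀ j, 0 < εi j) (T : Finset (Fin n)) :
    0 < ∏ j ∈ T, εi j := Finset.prod_pos fun j _ => h0 j

lemma aux_prod_le_one (h0 : ∀ j, 0 < εi j) (h1 : ∀ j, εi j < 1) (T : Finset (Fin n)) :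
    ∏ j ∈ T, εi j ≤ 1 :=
  Finset.prod_le_one (fun j _ => (h0 j).le) (fun j _ => (h1 j).le)

/-- `fcoef` as a geometric-type series. -/
lemma fcoef_eq (h0 : ∀ j, 0 < εi j) (h1 : ∀ j, εi j < 1)
    (i : Fin n) (S : Finset (Fin n)) (hi : i ∈ S) :
    fcoef (fun I => ∏ j ∈ I, εi j) i S
      = ∑' k : ℕ, (∏ j ∈ (S.erase i)ᶜ, εi j) ^ k * ∏ j ∈ S.erase i, (1 - εi j ^ k) := by
  classical
  set a : ℝ := ∏ j ∈ (S.erase i)ᶜ, εi j with ha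
  have hiC : i ∈ (S.erase i)ᶜ := by simp
  have ha0 : 0 < a := aux_prod_pos εi h0 _
  have ha1 : a < 1 := by
    calc a = εi i * ∏ j ∈ ((S.erase i)ᶜ).erase i, εi j :=
          (Finset.mul_prod_erase _ _ hiC).symm
      _ ≤ εi i * 1 := by
          have := aux_prod_le_one εi h0 h1 (((S.erase i)ᶜ).erase i)
          nlinarith [h0 i, aux_prod_pos εi h0 (((S.erase i)ᶜ).erase i)]
      _ < 1 := by rw [mul_one]; exact h1 i
  have hr : ∀ H ∈ (S.erase i).powerset, 0 ≤ a * ∏ j ∈ H, εi j ∧ a * ∏ j ∈ H, εi j < 1 := by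
    intro H hH
    have hp0 := aux_prod_pos εi h0 H
    have hp1 := aux_prod_le_one εi h0 h1 H
    constructor
    · positivity
    · nlinarith
  have key : ∀ H ∈ (S.erase i).powerset,
      (-1 : ℝ) ^ H.card / (1 - ∏ j ∈ (S.erase i)ᶜ ∪ H, εi j)
        = ∑' k : ℕ, (-1 : ℝ) ^ H.card * (a * ∏ j ∈ H, εi j) ^ k := by
    intro H hH
    have hHsub : H ⊆ S.erase i := Finset.mem_powerset.mp hH
    have hdisj : Disjoint ((S.erase i)ᶜ) H :=
      Finset.disjoint_left.mpr fun x hx hx' => (Finset.mem_compl.mp hx) (hHsub hx')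
    have hu : ∏ j ∈ (S.erase i)ᶜ ∪ H, εi j = a * ∏ j ∈ H, εi j := by
      rw [Finset.prod_union hdisj]
    rw [hu, tsum_mul_left, tsum_geometric_of_lt_one (hr H hH).1 (hr H hH).2, div_eq_mul_inv]
  have hsumm : ∀ H ∈ (S.erase i).powerset,
      Summable (fun k : ℕ => (-1 : ℝ) ^ H.card * (a * ∏ j ∈ H, εi j) ^ k) := by
    intro H hH
    exact (summable_geometric_of_lt_one (hr H hH).1 (hr H hH).2).mul_left _
  rw [fcoef, Finset.sum_congr rfl key, ← Summable.tsum_finsetSum hsumm]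
  refine tsum_congr fun k => ?_
  have : ∏ j ∈ S.erase i, (1 - εi j ^ k)
      = ∑ H ∈ (S.erase i).powerset, (-1 : ℝ) ^ H.card * (∏ j ∈ H, εi j) ^ k := by
    have := Finset.prod_add (fun j => -(εi j ^ k)) (fun _ => (1 : ℝ)) (S.erase i)
    simp only [Finset.prod_const_one, mul_one] at this
    calc ∏ j ∈ S.erase i, (1 - εi j ^ k)
        = ∏ j ∈ S.erase i, (-(εi j ^ k) + 1) := by
          refine Finset.prod_congr rfl fun j _ => by ring
      _ = ∑ H ∈ (S.erase i).powerset, ∏ j ∈ H, -(εi j ^ k) := this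
      _ = ∑ H ∈ (S.erase i).powerset, (-1 : ℝ) ^ H.card * (∏ j ∈ H, εi j) ^ k := by
          refine Finset.sum_congr rfl fun H _ => ?_
          have h2 : ∏ j ∈ H, -(εi j ^ k) = ∏ j ∈ H, ((-1 : ℝ) * εi j ^ k) :=
            Finset.prod_congr rfl fun j _ => by ring
          rw [h2, Finset.prod_mul_distrib, Finset.prod_const, Finset.prod_pow]
  rw [this, Finset.mul_sum]
  refine Finset.sum_congr rfl fun H _ => by ring

/-- summability of the series -/
lemma fcoef_summable (h0 : ∀ j, 0 < εi j) (h1 : ∀ j, εi j < 1)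
    (i : Fin n) (S : Finset (Fin n)) (c : ℝ) :
    Summable (fun k : ℕ =>
      (∏ j ∈ (S.erase i)ᶜ, εi j) ^ k * (∏ j ∈ S.erase i, (1 - εi j ^ k)) * c) := by
  set a : ℝ := ∏ j ∈ (S.erase i)ᶜ, εi j with ha
  have ha0 : 0 < a := aux_prod_pos εi h0 _
  have hiC : i ∈ (S.erase i)ᶜ := by simp
  have ha1 : a < 1 := by
    calc a = εi i * ∏ j ∈ ((S.erase i)ᶜ).erase i, εi j :=
          (Finset.mul_prod_erase _ _ hiC).symm
      _ ≤ εi i * 1 := by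
          have := aux_prod_le_one εi h0 h1 (((S.erase i)ᶜ).erase i)
          nlinarith [h0 i, aux_prod_pos εi h0 (((S.erase i)ᶜ).erase i)]
      _ < 1 := by rw [mul_one]; exact h1 i
  have hgeo : Summable (fun k : ℕ => a ^ k * |c|) :=
    (summable_geometric_of_lt_one ha0.le ha1).mul_right _
  refine hgeo.of_norm_bounded fun k => ?_
  have hP0 : 0 ≤ ∏ j ∈ S.erase i, (1 - εi j ^ k) :=
    Finset.prod_nonneg fun j _ => by
      have : εi j ^ k ≤ 1 := pow_le_one₀ (h0 j).le (h1 j).le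
      linarith
  have hP1 : ∏ j ∈ S.erase i, (1 - εi j ^ k) ≤ 1 :=
    Finset.prod_le_one (fun j _ => by
      have : εi j ^ k ≤ 1 := pow_le_one₀ (h0 j).le (h1 j).le
      linarith)
      (fun j _ => by have := pow_nonneg (h0 j).le k; linarith)
  rw [Real.norm_eq_abs, abs_mul, abs_mul]
  have hak : |a ^ k| = a ^ k := abs_of_nonneg (by positivity)
  rw [hak, abs_of_nonneg hP0]
  have : a ^ k * ∏ j ∈ S.erase i, (1 - εi j ^ k) ≤ a ^ k * 1 :=
    mul_le_mul_of_nonneg_left hP1 (by positivity)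
  nlinarith [abs_nonneg c, pow_nonneg ha0.le k]

/-- the core termwise inequality -/
lemma core_ineq {a b Ra Rb : ℝ} (ha0 : 0 < a) (hb1 : b < 1) (hab : a ≤ b)
    (hRb : 0 ≤ Rb) (hfair : a * Ra ≤ b * Rb) (k : ℕ) :
    a ^ k * Ra * (1 - b ^ k) ≤ b ^ k * Rb * (1 - a ^ k) := by
  cases k with
  | zero => simp
  | succ k =>
    have hb0 : 0 < b := lt_of_lt_of_le ha0 hab
    have hpow : a ^ k ≤ b ^ k := pow_le_pow_left₀ ha0.le hab k
    have h1 : a ^ (k + 1) * Ra ≤ b ^ (k + 1) * Rb := by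
      calc a ^ (k + 1) * Ra = (a * Ra) * a ^ k := by ring
        _ ≤ (b * Rb) * b ^ k := by
            apply mul_le_mul hfair hpow (pow_nonneg ha0.le k)
            positivity
        _ = b ^ (k + 1) * Rb := by ring
    have h2 : a ^ (k + 1) ≤ b ^ (k + 1) := pow_le_pow_left₀ ha0.le hab _
    have h3 : b ^ (k + 1) < 1 := pow_lt_one₀ hb0.le hb1 (Nat.succ_ne_zero k)
    apply mul_le_mul h1 (by linarith) (by linarith) (by positivity)

end aux

/-- One-sided fair, spatially independent channel: with `ε_1 ≥ … ≥ ε_N`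
(`0 < ε_j < 1`), `ε_I = ∏_{j∈I} ε_j`, positive rates `R` satisfying
`ε_1 R_1 ≥ … ≥ ε_N R_N`, for every nonempty `S` the maximum of `f^i_S R_i`
over `i ∈ S` is attained at the smallest index `m = min S`:
`f^m_S R_m ≥ f^i_S R_i` for every `i ∈ S`. -/
theorem stmt_16 {n : ℕ} (εi : Fin n → ℝ)
    (h0 : ∀ j, 0 < εi j) (h1 : ∀ j, εi j < 1)
    (hmono : ∀ j k : Fin n, j ≤ k → εi k ≤ εi j)
    (R : Fin n → ℝ) (hR : ∀ j, 0 < R j)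
    (hfair : ∀ j k : Fin n, j ≤ k → εi k * R k ≤ εi j * R j)
    (S : Finset (Fin n)) (hS : S.Nonempty) :
    ∀ i ∈ S, fcoef (fun I => ∏ j ∈ I, εi j) i S * R i
      ≤ fcoef (fun I => ∏ j ∈ I, εi j) (S.min' hS) S * R (S.min' hS) := by
  classical
  intro i hi
  set m := S.min' hS with hm
  have hmS : m ∈ S := S.min'_mem hS
  by_cases him : i = m
  · subst him; exact le_refl _
  have hmi : m ≤ i := S.min'_le i hi
  rw [fcoef_eq εi h0 h1 i S hi, fcoef_eq εi h0 h1 m S hmS,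
    ← tsum_mul_right, ← tsum_mul_right]
  refine Summable.tsum_le_tsum ?_ (fcoef_summable εi h0 h1 i S (R i))
    (fcoef_summable εi h0 h1 m S (R m))
  intro k
  -- decompose the complements
  have hcompl : ∀ x : Fin n, x ∈ S → (S.erase x)ᶜ = insert x Sᶜ := by
    intro x hx
    ext j
    simp only [Finset.mem_compl, Finset.mem_erase, Finset.mem_insert, not_and]
    tauto
  set c : ℝ := ∏ j ∈ Sᶜ, εi j with hc
  have hprodc : ∀ x : Fin n, x ∈ S →
      ∏ j ∈ (S.erase x)ᶜ, εi j = εi x * c := by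
    intro x hx
    rw [hcompl x hx, Finset.prod_insert (by simp [hx])]
  -- decompose the products over erase sets
  have hmem_i : m ∈ S.erase i := Finset.mem_erase.mpr ⟨fun h => him h.symm, hmS⟩
  have hmem_m : i ∈ S.erase m := Finset.mem_erase.mpr ⟨him, hi⟩
  set P : ℝ := ∏ j ∈ (S.erase i).erase m, (1 - εi j ^ k) with hP
  have hPi : ∏ j ∈ S.erase i, (1 - εi j ^ k) = (1 - εi m ^ k) * P :=
    (Finset.mul_prod_erase _ _ hmem_i).symm
  have hPm : ∏ j ∈ S.erase m, (1 - εi j ^ k) = (1 - εi i ^ k) * P := by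
    rw [← Finset.mul_prod_erase (S.erase m) _ hmem_m, Finset.erase_right_comm]
  have hP0 : 0 ≤ P := Finset.prod_nonneg fun j _ => by
    have : εi j ^ k ≤ 1 := pow_le_one₀ (h0 j).le (h1 j).le
    linarith
  have hc0 : 0 < c := aux_prod_pos εi h0 _
  rw [hprodc i hi, hprodc m hmS, hPi, hPm, mul_pow, mul_pow]
  have hcore : εi i ^ k * R i * (1 - εi m ^ k) ≤ εi m ^ k * R m * (1 - εi i ^ k) :=
    core_ineq (h0 i) (h1 m) (hmono m i hmi) (hR m).le (hfair m i hmi) k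
  have hckP : 0 ≤ c ^ k * P := by positivity
  calc εi i ^ k * c ^ k * ((1 - εi m ^ k) * P) * R i
      = (c ^ k * P) * (εi i ^ k * R i * (1 - εi m ^ k)) := by ring
    _ ≤ (c ^ k * P) * (εi m ^ k * R m * (1 - εi i ^ k)) :=
        mul_le_mul_of_nonneg_left hcore hckP
    _ = εi m ^ k * c ^ k * ((1 - εi i ^ k) * P) * R m := by ring
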